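/- Let w be a word, S ⊆ ℤ_{>0} finite, and consider the relation S ⋆ (u aba v) = S ⋆ (u bab v) for all positive integers a, b and words u, v. This holds for the ⋆ column-bumping action; in particular S ⋆ aba = S ⋆ bab for all S, a, b. -/

import Mathlib

/-- The `⋆` column-bumping action of a single letter `m` on a finite set `S`:
if no element of `S` is `≥ m`, then `S ⋆ m = S ∪ {m}`; otherwise
`S ⋆ m = (S \ {m'}) ∪ {m}` where `m' = min {s ∈ S : s ≥ m}`. -/
def starLetter (S : Finset ℕ) (m : ℕ) : Finset ℕ :=
  if h : (S.filter (fun s => m ≤ s)).Nonempty then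
    insert m (S.erase ((S.filter (fun s => m ≤ s)).min' h))
  else insert m S

/-- The `⋆` action of a word, letter by letter from the left. -/
def star (S : Finset ℕ) (w : List ℕ) : Finset ℕ :=
  w.foldl starLetter S

lemma starLetter_eq_insert {S : Finset ℕ} {m : ℕ} (h : ∀ s ∈ S, ¬ m ≤ s) :
    starLetter S m = insert m S := by
  rw [starLetter, dif_neg]
  rintro ⟨s, hs⟩
  rw [Finset.mem_filter] at hs
  exact h s hs.1 hs.2

lemma starLetter_eq {S : Finset ℕ} {m m' : ℕ} (h1 : m' ∈ S) (h2 : m ≤ m')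
    (h3 : ∀ s ∈ S, m ≤ s → m' ≤ s) :
    starLetter S m = insert m (S.erase m') := by
  have hne : (S.filter (fun s => m ≤ s)).Nonempty := ⟨m', by simp [h1, h2]⟩
  have hm : (S.filter (fun s => m ≤ s)).min' hne = m' := by
    refine le_antisymm (Finset.min'_le _ _ (by simp [h1, h2])) ?_
    have hmem := (S.filter (fun s => m ≤ s)).min'_mem hne
    rw [Finset.mem_filter] at hmem
    exact h3 _ hmem.1 hmem.2
  rw [starLetter, dif_pos hne, hm]

lemma mem_starLetter (S : Finset ℕ) (m : ℕ) : m ∈ starLetter S m := by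
  rw [starLetter]; split <;> simp

lemma starLetter_self {S : Finset ℕ} {m : ℕ} (h : m ∈ S) : starLetter S m = S := by
  rw [starLetter_eq h le_rfl (fun s _ hs => hs), Finset.insert_erase h]

lemma mem_starLetter_of_lt {T : Finset ℕ} {a b : ℕ} (hab : a < b) (ha : a ∈ T) :
    a ∈ starLetter T b := by
  rw [starLetter]
  split
  case isTrue hne =>
    have hm := (T.filter (fun s => b ≤ s)).min'_mem hne
    rw [Finset.mem_filter] at hm
    exact Finset.mem_insert_of_mem (Finset.mem_erase.mpr ⟨by omega, ha⟩)
  case isFalse => exact Finset.mem_insert_of_mem ha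

/-- When `S` has no element in `[a, b)`, bumping `b` then `a` is the same as bumping `a`. -/
lemma star_gap {S : Finset ℕ} {a b : ℕ} (hab : a < b)
    (hA : ∀ s ∈ S, a ≤ s → b ≤ s) :
    starLetter (starLetter S b) a = starLetter S a := by
  by_cases hFb : ∃ t ∈ S, b ≤ t
  · obtain ⟨t0, ht0S, ht0b⟩ := hFb
    have hFbNe : (S.filter (fun s => b ≤ s)).Nonempty := ⟨t0, by simp [ht0S, ht0b]⟩
    set y := (S.filter (fun s => b ≤ s)).min' hFbNe with hy
    have hyS : y ∈ S := (Finset.mem_filter.mp ((S.filter _).min'_mem hFbNe)).1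
    have hby : b ≤ y := (Finset.mem_filter.mp ((S.filter _).min'_mem hFbNe)).2
    have hymin : ∀ s ∈ S, b ≤ s → y ≤ s := fun s hs h =>
      Finset.min'_le _ s (by simp [hs, h])
    have hSb : starLetter S b = insert b (S.erase y) := starLetter_eq hyS hby hymin
    have hSa : starLetter S a = insert a (S.erase y) :=
      starLetter_eq hyS (by omega) (fun s hs h => hymin s hs (hA s hs h))
    rw [hSb, hSa]
    have hbny : b ∉ S.erase y := by
      intro hb
      have hbS := Finset.mem_of_mem_erase hb
      have : y ≤ b := hymin b hbS le_rfl
      have : y = b := le_antisymm this hby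
      exact (Finset.mem_erase.mp hb).1 (by omega)
    have := starLetter_eq (S := insert b (S.erase y)) (m := a) (m' := b)
      (Finset.mem_insert_self _ _) (by omega) ?_
    · rw [this, Finset.erase_insert hbny]
    · intro s hs h
      rcases Finset.mem_insert.mp hs with rfl | hs
      · rfl
      · exact hA s (Finset.mem_of_mem_erase hs) h
  · push_neg at hFb
    have hFa : ∀ s ∈ S, ¬ a ≤ s := fun s hs h => by
      have := hA s hs h; exact absurd this (by exact_mod_cast fun hh => (hFb s hs).not_ge hh)
    have hSb : starLetter S b = insert b S := starLetter_eq_insert (fun s hs h => (hFb s hs).not_ge h)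
    have hSa : starLetter S a = insert a S := starLetter_eq_insert hFa
    rw [hSb, hSa]
    have hbS : b ∉ S := fun hb => (hFb b hb).not_ge le_rfl
    have := starLetter_eq (S := insert b S) (m := a) (m' := b)
      (Finset.mem_insert_self _ _) (by omega) ?_
    · rw [this, Finset.erase_insert hbS]
    · intro s hs h
      rcases Finset.mem_insert.mp hs with rfl | hs
      · rfl
      · exact absurd h (hFa s hs)

/-- When `S` has an element in `[a, b)`, bumping `a` and `b` commute. -/
lemma star_comm {S : Finset ℕ} {a b : ℕ} (hab : a < b)
    (hA : ∃ s ∈ S, a ≤ s ∧ s < b) :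
    starLetter (starLetter S b) a = starLetter (starLetter S a) b := by
  obtain ⟨s0, hs0S, hs0a, hs0b⟩ := hA
  have hFaNe : (S.filter (fun s => a ≤ s)).Nonempty := ⟨s0, by simp [hs0S, hs0a]⟩
  set x := (S.filter (fun s => a ≤ s)).min' hFaNe with hx
  have hxS : x ∈ S := (Finset.mem_filter.mp ((S.filter _).min'_mem hFaNe)).1
  have hax : a ≤ x := (Finset.mem_filter.mp ((S.filter _).min'_mem hFaNe)).2
  have hxmin : ∀ s ∈ S, a ≤ s → x ≤ s := fun s hs h =>
    Finset.min'_le _ s (by simp [hs, h])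
  have hxb : x < b := lt_of_le_of_lt (hxmin s0 hs0S hs0a) hs0b
  have hSa : starLetter S a = insert a (S.erase x) := starLetter_eq hxS hax hxmin
  by_cases hFb : ∃ t ∈ S, b ≤ t
  · obtain ⟨t0, ht0S, ht0b⟩ := hFb
    have hFbNe : (S.filter (fun s => b ≤ s)).Nonempty := ⟨t0, by simp [ht0S, ht0b]⟩
    set y := (S.filter (fun s => b ≤ s)).min' hFbNe with hy
    have hyS : y ∈ S := (Finset.mem_filter.mp ((S.filter _).min'_mem hFbNe)).1
    have hby : b ≤ y := (Finset.mem_filter.mp ((S.filter _).min'_mem hFbNe)).2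
    have hymin : ∀ s ∈ S, b ≤ s → y ≤ s := fun s hs h =>
      Finset.min'_le _ s (by simp [hs, h])
    have hSb : starLetter S b = insert b (S.erase y) := starLetter_eq hyS hby hymin
    have hxy : x ≠ y := by omega
    -- LHS : (S ⋆ b) ⋆ a
    have hL : starLetter (starLetter S b) a
        = insert a (insert b ((S.erase y).erase x)) := by
      rw [hSb]
      have h1 : starLetter (insert b (S.erase y)) a
          = insert a ((insert b (S.erase y)).erase x) := by
        refine starLetter_eq ?_ hax ?_
        · exact Finset.mem_insert_of_mem (Finset.mem_erase.mpr ⟨hxy, hxS⟩)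
        · intro s hs h
          rcases Finset.mem_insert.mp hs with rfl | hs
          · omega
          · exact hxmin s (Finset.mem_of_mem_erase hs) h
      rw [h1, Finset.erase_insert_of_ne (by omega)]
    -- RHS : (S ⋆ a) ⋆ b
    have hR : starLetter (starLetter S a) b
        = insert b (insert a ((S.erase x).erase y)) := by
      rw [hSa]
      have h1 : starLetter (insert a (S.erase x)) b
          = insert b ((insert a (S.erase x)).erase y) := by
        refine starLetter_eq ?_ hby ?_
        · exact Finset.mem_insert_of_mem (Finset.mem_erase.mpr ⟨(Ne.symm hxy), hyS⟩)
        · intro s hs h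
          rcases Finset.mem_insert.mp hs with rfl | hs
          · omega
          · exact hymin s (Finset.mem_of_mem_erase hs) h
      rw [h1, Finset.erase_insert_of_ne (by omega)]
    rw [hL, hR]
    ext t
    simp only [Finset.mem_insert, Finset.mem_erase]
    constructor
    · rintro (h | h | ⟨h1, h2, h3⟩)
      · exact Or.inr (Or.inl h)
      · exact Or.inl h
      · exact Or.inr (Or.inr ⟨h2, h1, h3⟩)
    · rintro (h | h | ⟨h1, h2, h3⟩)
      · exact Or.inr (Or.inl h)
      · exact Or.inl h
      · exact Or.inr (Or.inr ⟨h2, h1, h3⟩)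
  · push_neg at hFb
    have hSb : starLetter S b = insert b S :=
      starLetter_eq_insert (fun s hs h => absurd h (hFb s hs).not_ge)
    have hbS : b ∉ S := fun hb => absurd le_rfl (hFb b hb).not_ge
    -- LHS
    have hL : starLetter (starLetter S b) a = insert a (insert b (S.erase x)) := by
      rw [hSb]
      have h1 : starLetter (insert b S) a = insert a ((insert b S).erase x) := by
        refine starLetter_eq (Finset.mem_insert_of_mem hxS) hax ?_
        intro s hs h
        rcases Finset.mem_insert.mp hs with rfl | hs
        · omega
        · exact hxmin s hs h
      rw [h1, Finset.erase_insert_of_ne (by omega)]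
    -- RHS
    have hR : starLetter (starLetter S a) b = insert b (insert a (S.erase x)) := by
      rw [hSa]
      refine starLetter_eq_insert ?_
      intro s hs h
      rcases Finset.mem_insert.mp hs with rfl | hs
      · omega
      · exact absurd h (hFb s (Finset.mem_of_mem_erase hs)).not_ge
    rw [hL, hR]
    ext t
    simp only [Finset.mem_insert]
    constructor
    · rintro (h | h | h)
      · exact Or.inr (Or.inl h)
      · exact Or.inl h
      · exact Or.inr (Or.inr h)
    · rintro (h | h | h)
      · exact Or.inr (Or.inl h)
      · exact Or.inl h
      · exact Or.inr (Or.inr h)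

lemma braid_lt {S : Finset ℕ} {a b : ℕ} (hab : a < b) :
    starLetter (starLetter (starLetter S a) b) a
      = starLetter (starLetter (starLetter S b) a) b := by
  rw [starLetter_self (mem_starLetter_of_lt hab (mem_starLetter S a))]
  by_cases hA : ∃ s ∈ S, a ≤ s ∧ s < b
  · rw [star_comm hab hA, starLetter_self (mem_starLetter _ _)]
  · push_neg at hA
    rw [star_gap hab (fun s hs h => hA s hs h)]

lemma braid (S : Finset ℕ) (a b : ℕ) :
    starLetter (starLetter (starLetter S a) b) a
      = starLetter (starLetter (starLetter S b) a) b := by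
  rcases lt_trichotomy a b with h | h | h
  · exact braid_lt h
  · rw [h]
  · exact (braid_lt h).symm

lemma star_append (S : Finset ℕ) (u v : List ℕ) :
    star S (u ++ v) = star (star S u) v :=
  List.foldl_append

/-- The `⋆` action satisfies the braid-type relation
`S ⋆ (u aba v) = S ⋆ (u bab v)` for all letters `a`, `b` and words `u`, `v`;
in particular `S ⋆ aba = S ⋆ bab` for all `S`, `a`, `b`. -/
theorem stmt19 :
    (∀ (S : Finset ℕ) (u v : List ℕ) (a b : ℕ),
      star S (u ++ [a, b, a] ++ v) = star S (u ++ [b, a, b] ++ v)) ∧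
    (∀ (S : Finset ℕ) (a b : ℕ), star S [a, b, a] = star S [b, a, b]) := by
  have key : ∀ (S : Finset ℕ) (a b : ℕ), star S [a, b, a] = star S [b, a, b] := by
    intro S a b
    simp only [_root_.star, List.foldl_cons, List.foldl_nil]
    exact braid S a b
  refine ⟨fun S u v a b => ?_, key⟩
  rw [star_append, star_append, star_append, star_append, key]
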